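/- Fidelity after graph state distribution: for every n ≥ 2, every simple graph G on n vertices with adjacency matrix A(G), and all two-qubit density matrices ρ₁ on A₁R₁, ρ₂ on A₂R₂, …, ρ_n on A_nR_n, the fidelity of the output of the graph state distribution channel with the graph state satisfies ⟨G| L^{(G)}(ρ₁ ⊗ ⋯ ⊗ ρ_n) |G⟩ = ∑_{x⃗ ∈ {0,1}^n} ∏_{i=1}^{n} ⟨Φ^{z_i,x_i}|ρ_i|Φ^{z_i,x_i}⟩, where z⃗ = A(G)·x⃗ mod 2. -/

import Mathlib

open BigOperators Matrix
open scoped ComplexOrder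

noncomputable section

/-- A qubit, with the bit-flip arithmetic of `ZMod 2`. -/
abbrev Qb := ZMod 2

/-- The qubit Bell state vector `|Φ^{z,x}⟩ = (Z^z X^x ⊗ 1)|Φ⟩`. -/
def bellVec (z x : Qb) : Qb × Qb → ℂ :=
  fun jk => if jk.1 = jk.2 + x then ((-1 : ℂ)) ^ ((jk.1 * z).val) / (Real.sqrt 2 : ℂ) else 0

/-- The Pauli power `Z^z` on a qubit. -/
def Zop2 (z : Qb) : Matrix Qb Qb ℂ :=
  Matrix.of fun i j => if i = j then ((-1 : ℂ)) ^ (z.val * i.val) else 0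

/-- The quadratic form `(1/2) α⊤ A(G) α = ∑_{{i,j} ∈ E} α_i α_j` of a graph `G`. -/
def quadForm (n : ℕ) (G : SimpleGraph (Fin n)) [DecidableRel G.Adj]
    (a : Fin n → Qb) : ℕ :=
  ∑ p ∈ Finset.univ.filter (fun p : Fin n × Fin n => p.1 < p.2 ∧ G.Adj p.1 p.2),
    (a p.1).val * (a p.2).val

/-- The graph state vector `|G⟩ = CZ(G) |+⟩^{⊗n}`. -/
def graphVec (n : ℕ) (G : SimpleGraph (Fin n)) [DecidableRel G.Adj] :
    (Fin n → Qb) → ℂ :=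
  fun a => ((-1 : ℂ)) ^ (quadForm n G a) / (Real.sqrt (2 ^ n) : ℂ)

/-- The shifted graph state vector `|G^{x⃗}⟩ = (Z^{x₁} ⊗ ⋯ ⊗ Z^{x_n})|G⟩`. -/
def graphVecX (n : ℕ) (G : SimpleGraph (Fin n)) [DecidableRel G.Adj]
    (x : Fin n → Qb) : (Fin n → Qb) → ℂ :=
  fun a => ((-1 : ℂ)) ^ (∑ i, (x i).val * (a i).val) * graphVec n G a

/-- The operator `Z^{x₁}_{A₁} ⊗ ⋯ ⊗ Z^{x_n}_{A_n} ⊗ ⟨G^{x⃗}|_{R₁⋯R_n}`, mapping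
the `2n`-qubit system `A₁⋯A_n R₁⋯R_n` to `A₁⋯A_n`. -/
def Bop (n : ℕ) (G : SimpleGraph (Fin n)) [DecidableRel G.Adj] (x : Fin n → Qb) :
    Matrix (Fin n → Qb) ((Fin n → Qb) × (Fin n → Qb)) ℂ :=
  Matrix.of fun a s =>
    (∏ i, Zop2 (x i) (a i) (s.1 i)) * (starRingEnd ℂ) (graphVecX n G x s.2)

/-- The graph state distribution channel
`L^{(G)}(ρ) = ∑_{x⃗} (Z^{x⃗} ⊗ ⟨G^{x⃗}|) ρ (Z^{x⃗} ⊗ |G^{x⃗}⟩)`. -/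
def graphChannel (n : ℕ) (G : SimpleGraph (Fin n)) [DecidableRel G.Adj]
    (ρ : Matrix ((Fin n → Qb) × (Fin n → Qb)) ((Fin n → Qb) × (Fin n → Qb)) ℂ) :
    Matrix (Fin n → Qb) (Fin n → Qb) ℂ :=
  ∑ x : Fin n → Qb, Bop n G x * ρ * (Bop n G x)ᴴ

/-- The tensor product `ρ₁ ⊗ ⋯ ⊗ ρ_n`, with `ρ_i` a state of the qubit pair `A_i R_i`. -/
def prodState (n : ℕ) (ρ : Fin n → Matrix (Qb × Qb) (Qb × Qb) ℂ) :
    Matrix ((Fin n → Qb) × (Fin n → Qb)) ((Fin n → Qb) × (Fin n → Qb)) ℂ :=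
  Matrix.of fun s s' => ∏ i, ρ i (s.1 i, s.2 i) (s'.1 i, s'.2 i)

/-- The fidelity `⟨ψ|ρ|ψ⟩` of a state `ρ` with a pure state `|ψ⟩`. -/
def fidTo {m' : Type*} [Fintype m'] (ψ : m' → ℂ) (ρ : Matrix m' m' ℂ) : ℂ :=
  ∑ i, ∑ j, (starRingEnd ℂ) (ψ i) * ρ i j * ψ j


/-! ### Auxiliary machinery -/

/-- The sign character of `ZMod 2`. -/
def chi (u : Qb) : ℂ := (-1 : ℂ) ^ u.val

lemma qb_cases (u : Qb) : u = 0 ∨ u = 1 := by revert u; decide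
lemma chi_zero : chi 0 = 1 := by simp [chi]
lemma chi_one : chi 1 = -1 := by simp [chi, ZMod.val_one]

lemma chi_add (u v : Qb) : chi (u + v) = chi u * chi v := by
  rcases qb_cases u with h | h <;> rcases qb_cases v with h' | h' <;>
    subst h <;> subst h' <;>
    simp [chi_zero, chi_one, show (1 + 1 : Qb) = 0 by decide, mul_comm]

lemma chi_natCast (k : ℕ) : ((-1 : ℂ)) ^ k = chi (k : Qb) := by
  induction k with
  | zero => simp [chi_zero]
  | succ m ih => rw [pow_succ, ih, Nat.cast_succ, chi_add, chi_one]

lemma chi_sum {ι : Type*} (s : Finset ι) (f : ι → Qb) :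
    chi (∑ i ∈ s, f i) = ∏ i ∈ s, chi (f i) := by
  classical
  induction s using Finset.induction with
  | empty => simp [chi_zero]
  | insert _ _ h ih => simp [Finset.sum_insert h, Finset.prod_insert h, chi_add, ih]

lemma val_cast (u : Qb) : ((u.val : ℕ) : Qb) = u := by revert u; decide

lemma sum_qb (f : Qb → ℂ) : ∑ t : Qb, f t = f 0 + f 1 := by
  show ∑ t : Fin 2, f t = _
  exact Fin.sum_univ_two f

lemma chi_conj (u : Qb) : (starRingEnd ℂ) (chi u) = chi u := by
  rcases qb_cases u with h | h <;> subst h <;> simp [chi_zero, chi_one]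

lemma qb_add_self (u : Qb) : u + u = 0 := by revert u; decide
lemma qb1 (u v y : Qb) : (u = v + y) ↔ y = u + v := by revert u v y; decide
lemma qb2 (u v : Qb) : u = v + (u + v) := by revert u v; decide
lemma qb3 (u v u' v' : Qb) : u' + v' = u + v → u' = v' + (u + v) := by revert u v u' v'; decide
lemma qb4 (u v u' v' : Qb) : u' + v' = u + v → u + v + u' + v' = 0 := by revert u v u' v'; decide
lemma qb5 (u v u' v' : Qb) : u' + v' ≠ u + v → u + v + u' + v' = 1 := by revert u v u' v'; decide
lemma qb6 (u v : Qb) : v = u + (u + v) := by revert u v; decide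
lemma qb7 (u v u' v' : Qb) : u' + v' = u + v → v' = u' + (u + v) := by revert u v u' v'; decide

section Graph
variable (n : ℕ) (G : SimpleGraph (Fin n)) [DecidableRel G.Adj]

/-- The edge set of `G` as a finset of ordered pairs with increasing components. -/
def Ed : Finset (Fin n × Fin n) :=
  Finset.univ.filter (fun p : Fin n × Fin n => p.1 < p.2 ∧ G.Adj p.1 p.2)

/-- The quadratic form of `G` valued in `ZMod 2`. -/
def Qf (a : Fin n → Qb) : Qb := ∑ p ∈ Ed n G, a p.1 * a p.2

/-- `A(G) x` mod 2. -/
def zf (x : Fin n → Qb) (i : Fin n) : Qb :=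
  ∑ j ∈ Finset.univ.filter (fun j => G.Adj i j), x j

/-- mod-2 dot product. -/
def dotQ (u v : Fin n → Qb) : Qb := ∑ i, u i * v i

lemma quad_cast (a : Fin n → Qb) : ((quadForm n G a : ℕ) : Qb) = Qf n G a := by
  unfold quadForm Qf Ed
  push_cast [val_cast]
  rfl

lemma graphVecX_eq (x a : Fin n → Qb) :
    graphVecX n G x a = chi (dotQ n x a) * chi (Qf n G a) / (Real.sqrt (2 ^ n) : ℂ) := by
  unfold graphVecX graphVec
  rw [chi_natCast, chi_natCast, quad_cast]
  have : ((∑ i, (x i).val * (a i).val : ℕ) : Qb) = dotQ n x a := by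
    unfold dotQ; push_cast [val_cast]; rfl
  rw [this]; ring

lemma graphVec_conj (a : Fin n → Qb) :
    (starRingEnd ℂ) (graphVec n G a) = graphVec n G a := by
  unfold graphVec
  rw [chi_natCast]
  simp [map_div₀, chi_conj, Complex.conj_ofReal]

lemma graphVecX_conj (x a : Fin n → Qb) :
    (starRingEnd ℂ) (graphVecX n G x a) = graphVecX n G x a := by
  rw [graphVecX_eq]
  simp [map_div₀, chi_conj, Complex.conj_ofReal]

lemma bellVec_conj (z x : Qb) (jk : Qb × Qb) :
    (starRingEnd ℂ) (bellVec z x jk) = bellVec z x jk := by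
  unfold bellVec
  split
  · rw [chi_natCast]
    simp [map_div₀, chi_conj, Complex.conj_ofReal]
  · simp

lemma bellVec_eq (z x : Qb) (jk : Qb × Qb) :
    bellVec z x jk = if jk.1 = jk.2 + x then chi (jk.1 * z) / (Real.sqrt 2 : ℂ) else 0 := by
  unfold bellVec
  rw [chi_natCast, val_cast]

lemma cross (u v : Fin n → Qb) :
    dotQ n u (zf n G v) = ∑ p ∈ Ed n G, (u p.1 * v p.2 + v p.1 * u p.2) := by
  have h1 : dotQ n u (zf n G v)
      = ∑ p ∈ Finset.univ.filter (fun p : Fin n × Fin n => G.Adj p.1 p.2), u p.1 * v p.2 := by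
    simp only [dotQ, zf, Finset.mul_sum, Finset.sum_filter, mul_ite, mul_zero,
      Fintype.sum_prod_type]
  rw [h1]
  set A' := Finset.univ.filter (fun p : Fin n × Fin n => G.Adj p.1 p.2) with hA'
  have hsplit := Finset.sum_filter_add_sum_filter_not A'
      (fun p : Fin n × Fin n => p.1 < p.2) (fun p => u p.1 * v p.2)
  have e1 : A'.filter (fun p : Fin n × Fin n => p.1 < p.2) = Ed n G := by
    unfold Ed; rw [hA', Finset.filter_filter]
    exact Finset.filter_congr fun p _ => by tauto
  have e2 : ∑ p ∈ A'.filter (fun p : Fin n × Fin n => ¬ p.1 < p.2), u p.1 * v p.2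
      = ∑ p ∈ Ed n G, v p.1 * u p.2 := by
    refine Finset.sum_nbij' (fun p => Prod.swap p) (fun p => Prod.swap p) ?_ ?_ ?_ ?_ ?_
    · intro p hp
      simp only [Finset.mem_filter, Finset.mem_univ, true_and, hA'] at hp
      obtain ⟨hadj, hlt⟩ := hp
      simp only [Ed, Finset.mem_filter, Finset.mem_univ, true_and]
      exact ⟨lt_of_le_of_ne (not_lt.mp hlt) (G.ne_of_adj hadj).symm, hadj.symm⟩
    · intro p hp
      simp only [Ed, Finset.mem_filter, Finset.mem_univ, true_and] at hp
      simp only [Finset.mem_filter, Finset.mem_univ, true_and, hA']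
      exact ⟨hp.2.symm, not_lt.mpr (le_of_lt hp.1)⟩
    · intro p _; exact Prod.swap_swap p
    · intro p _; exact Prod.swap_swap p
    · intro p _
      show u p.1 * v p.2 = v p.2 * u p.1
      ring
  rw [← hsplit, e1, e2, ← Finset.sum_add_distrib]

lemma polar (a x : Fin n → Qb) :
    Qf n G (fun i => a i + x i) = Qf n G a + Qf n G x + dotQ n a (zf n G x) := by
  rw [cross]
  unfold Qf
  rw [← Finset.sum_add_distrib, ← Finset.sum_add_distrib]
  refine Finset.sum_congr rfl fun p _ => ?_
  ring

lemma dot_add (x u v : Fin n → Qb) :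
    dotQ n x (fun i => u i + v i) = dotQ n x u + dotQ n x v := by
  unfold dotQ
  rw [← Finset.sum_add_distrib]
  exact Finset.sum_congr rfl fun i _ => by ring

lemma sqrt2n_sq : ((Real.sqrt (2 ^ n) : ℝ) : ℂ) ^ 2 = (2 : ℂ) ^ n := by
  rw [← Complex.ofReal_pow, Real.sq_sqrt (by positivity)]
  push_cast
  rfl

lemma sqrt2_sq : ((Real.sqrt 2 : ℝ) : ℂ) ^ 2 = 2 := by
  rw [← Complex.ofReal_pow, Real.sq_sqrt (by norm_num)]
  norm_num

/-- The core identity: the `x`-sums of the rank-one coefficients agree. -/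
lemma core (s s' : (Fin n → Qb) × (Fin n → Qb)) :
    ∑ x : Fin n → Qb,
        (graphVecX n G x s.1 * graphVecX n G x s.2)
          * (graphVecX n G x s'.1 * graphVecX n G x s'.2)
      = ∑ x : Fin n → Qb,
        (∏ i, bellVec (zf n G x i) (x i) (s.1 i, s.2 i))
          * (∏ i, bellVec (zf n G x i) (x i) (s'.1 i, s'.2 i)) := by
  obtain ⟨a, b⟩ := s
  obtain ⟨a', b'⟩ := s'
  simp only
  set t : ℂ := ((Real.sqrt (2 ^ n) : ℝ) : ℂ) with ht
  set r : ℂ := ((Real.sqrt 2 : ℝ) : ℂ) with hr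
  have h2n : ((2 : ℂ) ^ n) ≠ 0 := pow_ne_zero _ two_ne_zero
  set w : Fin n → Qb := fun i => a i + b i + a' i + b' i with hw
  set C : ℂ := chi (Qf n G a) * chi (Qf n G b) * chi (Qf n G a') * chi (Qf n G b') with hC
  set x₀ : Fin n → Qb := fun i => a i + b i with hx₀
  have hterm : ∀ x : Fin n → Qb,
      (graphVecX n G x a * graphVecX n G x b) * (graphVecX n G x a' * graphVecX n G x b')
        = chi (dotQ n x w) * (C / t ^ 4) := by
    intro x
    have hdw : dotQ n x w = dotQ n x a + dotQ n x b + dotQ n x a' + dotQ n x b' := by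
      rw [hw]
      rw [show (fun i => a i + b i + a' i + b' i)
            = fun i => (a i + b i + a' i) + b' i from rfl, dot_add n,
          show (fun i => a i + b i + a' i) = fun i => (a i + b i) + a' i from rfl, dot_add n,
          dot_add n]
    rw [graphVecX_eq, graphVecX_eq, graphVecX_eq, graphVecX_eq, hdw,
        chi_add, chi_add, chi_add, hC, ← ht]
    ring
  rw [Finset.sum_congr rfl fun x _ => hterm x, ← Finset.sum_mul]
  have hchar : (∑ x : Fin n → Qb, chi (dotQ n x w))
      = ∏ i, (1 + chi (w i)) := by
    have h2 := Finset.prod_univ_sum (fun _ : Fin n => (Finset.univ : Finset Qb))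
        (fun i u => chi (u * w i))
    rw [Fintype.piFinset_univ] at h2
    calc ∑ x : Fin n → Qb, chi (dotQ n x w)
        = ∑ x : Fin n → Qb, ∏ i, chi (x i * w i) :=
          Finset.sum_congr rfl fun x _ => chi_sum _ _
      _ = ∏ i, ∑ u : Qb, chi (u * w i) := h2.symm
      _ = ∏ i, (1 + chi (w i)) := by
          refine Finset.prod_congr rfl fun i _ => ?_
          rw [sum_qb (fun u => chi (u * w i)), zero_mul, one_mul, chi_zero]
  have hzero : ∀ x : Fin n → Qb, x ≠ x₀ →
      (∏ i, bellVec (zf n G x i) (x i) (a i, b i))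
        * (∏ i, bellVec (zf n G x i) (x i) (a' i, b' i)) = 0 := by
    intro x hx
    obtain ⟨i, hi⟩ : ∃ i, x i ≠ a i + b i := by
      by_contra hc; push_neg at hc; exact hx (funext hc)
    have hne : ¬ (a i = b i + x i) := fun h => hi ((qb1 _ _ _).mp h)
    have hb0 : bellVec (zf n G x i) (x i) (a i, b i) = 0 := by
      rw [bellVec_eq]; exact if_neg hne
    exact mul_eq_zero_of_left (Finset.prod_eq_zero (Finset.mem_univ i) hb0) _
  rw [Finset.sum_eq_single x₀ (fun x _ hx => hzero x hx)
      (fun h => absurd (Finset.mem_univ _) h)]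
  have hfirst : (∏ i, bellVec (zf n G x₀ i) (x₀ i) (a i, b i))
      = chi (dotQ n a (zf n G x₀)) / r ^ n := by
    have hf : ∀ i, bellVec (zf n G x₀ i) (x₀ i) (a i, b i)
        = chi (a i * zf n G x₀ i) / r := by
      intro i
      rw [bellVec_eq]
      exact if_pos (qb2 (a i) (b i))
    rw [Finset.prod_congr rfl fun i _ => hf i, Finset.prod_div_distrib,
        Finset.prod_const, ← chi_sum]
    simp [dotQ]
  by_cases hcase : ∀ i, a' i + b' i = a i + b i
  · have hw0 : ∀ i, w i = 0 := fun i => qb4 _ _ _ _ (hcase i)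
    have hsum2 : (∏ i, (1 + chi (w i))) = (2 : ℂ) ^ n := by
      rw [Finset.prod_congr rfl fun i _ => by rw [hw0 i, chi_zero]]
      norm_num
    have hsecond : (∏ i, bellVec (zf n G x₀ i) (x₀ i) (a' i, b' i))
        = chi (dotQ n a' (zf n G x₀)) / r ^ n := by
      have hf : ∀ i, bellVec (zf n G x₀ i) (x₀ i) (a' i, b' i)
          = chi (a' i * zf n G x₀ i) / r := by
        intro i
        rw [bellVec_eq]
        exact if_pos (qb3 _ _ _ _ (hcase i))
      rw [Finset.prod_congr rfl fun i _ => hf i, Finset.prod_div_distrib,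
          Finset.prod_const, ← chi_sum]
      simp [dotQ]
    rw [hchar, hsum2, hfirst, hsecond]
    have hb : b = fun i => a i + x₀ i := funext fun i => qb6 (a i) (b i)
    have hb' : b' = fun i => a' i + x₀ i := funext fun i => qb7 _ _ _ _ (hcase i)
    have hCval : C = chi (dotQ n a (zf n G x₀)) * chi (dotQ n a' (zf n G x₀)) := by
      have h1 : Qf n G b = Qf n G a + Qf n G x₀ + dotQ n a (zf n G x₀) := by
        rw [hb]; exact polar n G a x₀
      have h2 : Qf n G b' = Qf n G a' + Qf n G x₀ + dotQ n a' (zf n G x₀) := by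
        rw [hb']; exact polar n G a' x₀
      have hq : Qf n G a + Qf n G b + Qf n G a' + Qf n G b'
          = dotQ n a (zf n G x₀) + dotQ n a' (zf n G x₀) := by
        rw [h1, h2]
        generalize Qf n G a = A1
        generalize Qf n G a' = A2
        generalize Qf n G x₀ = A3
        generalize dotQ n a (zf n G x₀) = D1
        generalize dotQ n a' (zf n G x₀) = D2
        revert A1 A2 A3 D1 D2; decide
      rw [hC, ← chi_add, ← chi_add, ← chi_add, hq, chi_add]
    rw [hCval]
    have ht4 : t ^ 4 = ((2:ℂ) ^ n) ^ 2 := by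
      rw [show (4 : ℕ) = 2 * 2 from rfl, pow_mul, ht, sqrt2n_sq n]
    have hrn : r ^ n * r ^ n = (2:ℂ) ^ n := by
      rw [← mul_pow, ← sq, hr, sqrt2_sq]
    rw [ht4, div_mul_div_comm, hrn, pow_two]
    field_simp
  · push_neg at hcase
    obtain ⟨i, hi⟩ := hcase
    have hsum0 : (∏ i, (1 + chi (w i))) = 0 := by
      refine Finset.prod_eq_zero (Finset.mem_univ i) ?_
      rw [show w i = 1 from qb5 _ _ _ _ hi, chi_one]
      ring
    have hne : ¬ (a' i = b' i + x₀ i) := fun h =>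
      hi (((qb1 (a' i) (b' i) (x₀ i)).mp h).symm)
    have hz2 : bellVec (zf n G x₀ i) (x₀ i) (a' i, b' i) = 0 := by
      rw [bellVec_eq]; exact if_neg hne
    have hp2 : (∏ i, bellVec (zf n G x₀ i) (x₀ i) (a' i, b' i)) = 0 :=
      Finset.prod_eq_zero (Finset.mem_univ i) hz2
    rw [hchar, hsum0, hp2]
    ring

/-- Contraction of the graph-state bra against `Bop`. -/
lemma contract (x : Fin n → Qb) (s : (Fin n → Qb) × (Fin n → Qb)) :
    (star (graphVec n G) ᵥ* Bop n G x) s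
      = graphVecX n G x s.1 * graphVecX n G x s.2 := by
  have hprod : ∀ a : Fin n → Qb,
      (∏ i, Zop2 (x i) (a i) (s.1 i))
        = if a = s.1 then ((-1:ℂ)) ^ (∑ i, (x i).val * (s.1 i).val) else 0 := by
    intro a
    by_cases h : a = s.1
    · subst h
      simp only [if_pos rfl, Zop2, Matrix.of_apply, if_pos rfl]
      exact Finset.prod_pow_eq_pow_sum _ _ _
    · rw [if_neg h]
      obtain ⟨i, hi⟩ : ∃ i, a i ≠ s.1 i := by
        by_contra hc; push_neg at hc; exact h (funext hc)
      exact Finset.prod_eq_zero (Finset.mem_univ i) (by simp [Zop2, hi])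
  unfold Matrix.vecMul dotProduct
  simp only [Bop, Matrix.of_apply, Pi.star_apply]
  rw [Finset.sum_congr rfl (fun a _ => by rw [hprod a])]
  simp only [ite_mul, zero_mul, mul_ite, mul_zero, Finset.sum_ite_eq' Finset.univ s.1]
  simp only [Finset.mem_univ, if_pos]
  rw [graphVecX_conj]
  rw [show star (graphVec n G s.1) = graphVec n G s.1 from graphVec_conj n G s.1]
  unfold graphVecX
  ring

end Graph

lemma fidTo_dot {m' : Type*} [Fintype m'] (ψ : m' → ℂ) (M : Matrix m' m' ℂ) :
    fidTo ψ M = star ψ ⬝ᵥ M *ᵥ ψ := by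
  unfold fidTo dotProduct Matrix.mulVec dotProduct
  refine Finset.sum_congr rfl fun i _ => ?_
  rw [Finset.mul_sum]
  exact Finset.sum_congr rfl fun j _ => by simp [mul_assoc]

lemma fidTo_zero {m' : Type*} [Fintype m'] (ψ : m' → ℂ) : fidTo ψ 0 = 0 := by
  simp [fidTo]

lemma fidTo_add {m' : Type*} [Fintype m'] (ψ : m' → ℂ) (M N : Matrix m' m' ℂ) :
    fidTo ψ (M + N) = fidTo ψ M + fidTo ψ N := by
  simp [fidTo, Matrix.add_apply, mul_add, add_mul, Finset.sum_add_distrib]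

lemma fidTo_sum {m' ι : Type*} [Fintype m'] (ψ : m' → ℂ) (F : Finset ι)
    (M : ι → Matrix m' m' ℂ) :
    fidTo ψ (∑ x ∈ F, M x) = ∑ x ∈ F, fidTo ψ (M x) := by
  classical
  induction F using Finset.induction with
  | empty => simp [fidTo_zero]
  | insert _ _ h ih => rw [Finset.sum_insert h, fidTo_add, ih, Finset.sum_insert h]

/-- The left-hand side in canonical triple-sum form. -/
lemma lhs_form (n : ℕ) (G : SimpleGraph (Fin n)) [DecidableRel G.Adj]
    (P : Matrix ((Fin n → Qb) × (Fin n → Qb)) ((Fin n → Qb) × (Fin n → Qb)) ℂ) :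
    fidTo (graphVec n G) (graphChannel n G P)
      = ∑ x : Fin n → Qb, ∑ s : (Fin n → Qb) × (Fin n → Qb), ∑ s',
          (graphVecX n G x s.1 * graphVecX n G x s.2) * P s s' *
            (graphVecX n G x s'.1 * graphVecX n G x s'.2) := by
  unfold graphChannel
  rw [fidTo_sum]
  refine Finset.sum_congr rfl fun x _ => ?_
  rw [fidTo_dot, ← Matrix.mulVec_mulVec, ← Matrix.mulVec_mulVec,
      Matrix.dotProduct_mulVec, Matrix.mulVec_conjTranspose]
  have hv : star (graphVec n G) ᵥ* Bop n G x
      = fun s => graphVecX n G x s.1 * graphVecX n G x s.2 := funext (contract n G x)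
  rw [hv]
  have hv2 : star (fun s : (Fin n → Qb) × (Fin n → Qb) =>
      graphVecX n G x s.1 * graphVecX n G x s.2)
      = fun s => graphVecX n G x s.1 * graphVecX n G x s.2 := by
    funext s
    rw [Pi.star_apply, show star (graphVecX n G x s.1 * graphVecX n G x s.2)
      = (starRingEnd ℂ) (graphVecX n G x s.1 * graphVecX n G x s.2) from rfl,
      _root_.map_mul, graphVecX_conj, graphVecX_conj]
  rw [hv2]
  unfold dotProduct Matrix.mulVec dotProduct
  refine Finset.sum_congr rfl fun s _ => ?_
  rw [Finset.mul_sum]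
  exact Finset.sum_congr rfl fun s' _ => by ring

/-- Regrouping a function into pairs. -/
def pairEquiv (n : ℕ) :
    (((Fin n → Qb) × (Fin n → Qb)) × ((Fin n → Qb) × (Fin n → Qb)))
      ≃ (Fin n → (Qb × Qb) × (Qb × Qb)) where
  toFun ss := fun i => ((ss.1.1 i, ss.1.2 i), (ss.2.1 i, ss.2.2 i))
  invFun g := ((fun i => (g i).1.1, fun i => (g i).1.2),
               (fun i => (g i).2.1, fun i => (g i).2.2))
  left_inv ss := rfl
  right_inv g := by funext i; simp

/-- The right-hand side in canonical double-sum form. -/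
lemma rhs_form (n : ℕ) (ρ : Fin n → Matrix (Qb × Qb) (Qb × Qb) ℂ)
    (z x : Fin n → Qb) :
    ∏ i, fidTo (bellVec (z i) (x i)) (ρ i)
      = ∑ s : (Fin n → Qb) × (Fin n → Qb), ∑ s',
          (∏ i, (starRingEnd ℂ) (bellVec (z i) (x i) (s.1 i, s.2 i)))
            * prodState n ρ s s'
            * (∏ i, bellVec (z i) (x i) (s'.1 i, s'.2 i)) := by
  have step1 : ∀ i, fidTo (bellVec (z i) (x i)) (ρ i)
      = ∑ pq : (Qb × Qb) × (Qb × Qb),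
          (starRingEnd ℂ) (bellVec (z i) (x i) pq.1) * ρ i pq.1 pq.2
            * bellVec (z i) (x i) pq.2 := by
    intro i; rw [Fintype.sum_prod_type]; rfl
  calc ∏ i, fidTo (bellVec (z i) (x i)) (ρ i)
      = ∑ g ∈ Fintype.piFinset (fun _ : Fin n => (Finset.univ : Finset ((Qb × Qb) × (Qb × Qb)))),
          ∏ i, (starRingEnd ℂ) (bellVec (z i) (x i) (g i).1) * ρ i (g i).1 (g i).2
            * bellVec (z i) (x i) (g i).2 := by
        rw [Finset.prod_congr rfl fun i _ => step1 i]
        exact Finset.prod_univ_sum _ _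
    _ = ∑ g : Fin n → (Qb × Qb) × (Qb × Qb),
          ∏ i, (starRingEnd ℂ) (bellVec (z i) (x i) (g i).1) * ρ i (g i).1 (g i).2
            * bellVec (z i) (x i) (g i).2 := by rw [Fintype.piFinset_univ]
    _ = ∑ ss : ((Fin n → Qb) × (Fin n → Qb)) × ((Fin n → Qb) × (Fin n → Qb)),
          ∏ i, (starRingEnd ℂ) (bellVec (z i) (x i) (ss.1.1 i, ss.1.2 i))
            * ρ i (ss.1.1 i, ss.1.2 i) (ss.2.1 i, ss.2.2 i)
            * bellVec (z i) (x i) (ss.2.1 i, ss.2.2 i) := by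
        exact (Fintype.sum_equiv (pairEquiv n) _ _ (fun ss => rfl)).symm
    _ = ∑ s : (Fin n → Qb) × (Fin n → Qb), ∑ s',
          (∏ i, (starRingEnd ℂ) (bellVec (z i) (x i) (s.1 i, s.2 i)))
            * prodState n ρ s s'
            * (∏ i, bellVec (z i) (x i) (s'.1 i, s'.2 i)) := by
        rw [Fintype.sum_prod_type]
        refine Finset.sum_congr rfl fun s _ => Finset.sum_congr rfl fun s' _ => ?_
        rw [Finset.prod_mul_distrib, Finset.prod_mul_distrib]
        rfl

lemma swap3 {α β γ : Type*} [Fintype α] [Fintype β] [Fintype γ] (f : α → β → γ → ℂ) :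
    ∑ x : α, ∑ s : β, ∑ s' : γ, f x s s' = ∑ s : β, ∑ s' : γ, ∑ x : α, f x s s' := by
  rw [Finset.sum_comm]
  exact Finset.sum_congr rfl fun s _ => Finset.sum_comm

/-- **Fidelity after graph state distribution** (Proposition 3 of the paper):
the fidelity of the output with `|G⟩` equals
`∑_{x⃗} ∏_i ⟨Φ^{z_i,x_i}|ρ_i|Φ^{z_i,x_i}⟩` with `z⃗ = A(G) x⃗ (mod 2)`. -/
theorem fidelity_after_graph_state_distribution (n : ℕ) (hn : 2 ≤ n)
    (G : SimpleGraph (Fin n)) [DecidableRel G.Adj]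
    (ρ : Fin n → Matrix (Qb × Qb) (Qb × Qb) ℂ)
    (hρ : ∀ i, (ρ i).PosSemidef ∧ (ρ i).trace = 1) :
    fidTo (graphVec n G) (graphChannel n G (prodState n ρ))
      = ∑ x : Fin n → Qb, ∏ i : Fin n,
          fidTo (bellVec (∑ j ∈ Finset.univ.filter (fun j => G.Adj i j), x j) (x i))
            (ρ i) := by
  classical
  set P := prodState n ρ with hP
  calc fidTo (graphVec n G) (graphChannel n G P)
      = ∑ x : Fin n → Qb, ∑ s : (Fin n → Qb) × (Fin n → Qb), ∑ s',
          (graphVecX n G x s.1 * graphVecX n G x s.2) * P s s' *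
            (graphVecX n G x s'.1 * graphVecX n G x s'.2) := lhs_form n G P
    _ = ∑ s : (Fin n → Qb) × (Fin n → Qb), ∑ s', P s s' *
          ∑ x : Fin n → Qb,
            (graphVecX n G x s.1 * graphVecX n G x s.2) *
              (graphVecX n G x s'.1 * graphVecX n G x s'.2) := by
        rw [swap3]
        refine Finset.sum_congr rfl fun s _ => Finset.sum_congr rfl fun s' _ => ?_
        rw [Finset.mul_sum]
        exact Finset.sum_congr rfl fun x _ => by ring
    _ = ∑ s : (Fin n → Qb) × (Fin n → Qb), ∑ s', P s s' *
          ∑ x : Fin n → Qb,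
            (∏ i, bellVec (zf n G x i) (x i) (s.1 i, s.2 i))
              * (∏ i, bellVec (zf n G x i) (x i) (s'.1 i, s'.2 i)) := by
        refine Finset.sum_congr rfl fun s _ => Finset.sum_congr rfl fun s' _ => ?_
        rw [core n G s s']
    _ = ∑ x : Fin n → Qb, ∑ s : (Fin n → Qb) × (Fin n → Qb), ∑ s',
          (∏ i, bellVec (zf n G x i) (x i) (s.1 i, s.2 i)) * P s s' *
            (∏ i, bellVec (zf n G x i) (x i) (s'.1 i, s'.2 i)) := by
        rw [swap3]
        refine Finset.sum_congr rfl fun s _ => Finset.sum_congr rfl fun s' _ => ?_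
        rw [Finset.mul_sum]
        exact Finset.sum_congr rfl fun x _ => by ring
    _ = ∑ x : Fin n → Qb, ∑ s : (Fin n → Qb) × (Fin n → Qb), ∑ s',
          (∏ i, (starRingEnd ℂ) (bellVec (zf n G x i) (x i) (s.1 i, s.2 i))) * P s s' *
            (∏ i, bellVec (zf n G x i) (x i) (s'.1 i, s'.2 i)) := by
        refine Finset.sum_congr rfl fun x _ => Finset.sum_congr rfl fun s _ =>
          Finset.sum_congr rfl fun s' _ => ?_
        rw [Finset.prod_congr rfl fun i _ => (bellVec_conj (zf n G x i) (x i) (s.1 i, s.2 i))]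
    _ = ∑ x : Fin n → Qb, ∏ i : Fin n,
          fidTo (bellVec (zf n G x i) (x i)) (ρ i) :=
        Finset.sum_congr rfl fun x _ => (rhs_form n ρ (zf n G x) x).symm
    _ = ∑ x : Fin n → Qb, ∏ i : Fin n,
          fidTo (bellVec (∑ j ∈ Finset.univ.filter (fun j => G.Adj i j), x j) (x i))
            (ρ i) := rfl
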